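/- Let f, h : ℝ → ℝ be continuous nonnegative functions and λ > 0 a constant. If f(t)² ≤ e^{-λt} ∫₀ᵗ e^{λτ} h(τ) f(τ) dτ for all t ≥ 0, then ∫₀ᵀ f(t) dt ≤ (2/λ) ∫₀ᵀ h(t) dt for every T ≥ 0. -/

import Mathlib

open Real MeasureTheory Set

lemma sqr_gronwall (k g : ℝ → ℝ) (hk : Continuous k) (hg : Continuous g)
    (hk0 : ∀ t, 0 ≤ k t) (hg0 : ∀ t, 0 ≤ g t)
    (hyp : ∀ t ≥ (0:ℝ), g t ^ 2 ≤ ∫ τ in (0:ℝ)..t, k τ * g τ)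
    (ε : ℝ) (hε : 0 < ε) :
    ∀ t ≥ (0:ℝ), g t ≤ ε + (1/2) * ∫ τ in (0:ℝ)..t, k τ := by
  set F : ℝ → ℝ := fun t => ∫ τ in (0:ℝ)..t, k τ * g τ with hF
  set W : ℝ → ℝ := fun t => ∫ τ in (0:ℝ)..t, k τ with hW
  set V : ℝ → ℝ := fun t => Real.sqrt (F t + ε^2) with hV
  have hkg : Continuous fun τ => k τ * g τ := hk.mul hg
  have hFc : Continuous F := intervalIntegral.continuous_primitive
    (fun a b => hkg.intervalIntegrable a b) 0
  have hWc : Continuous W := intervalIntegral.continuous_primitive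
    (fun a b => hk.intervalIntegrable a b) 0
  have hF0 : ∀ t ≥ (0:ℝ), 0 ≤ F t := fun t ht =>
    intervalIntegral.integral_nonneg ht (fun u hu => mul_nonneg (hk0 u) (hg0 u))
  have hFpos : ∀ t ≥ (0:ℝ), 0 < F t + ε^2 := fun t ht =>
    add_pos_of_nonneg_of_pos (hF0 t ht) (pow_pos hε 2)
  -- derivative facts
  have hFd : ∀ t, HasDerivAt F (k t * g t) t := fun t =>
    intervalIntegral.integral_hasDerivAt_right (hkg.intervalIntegrable 0 t)
      (hkg.stronglyMeasurableAtFilter _ _) hkg.continuousAt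
  have hWd : ∀ t, HasDerivAt W (k t) t := fun t =>
    intervalIntegral.integral_hasDerivAt_right (hk.intervalIntegrable 0 t)
      (hk.stronglyMeasurableAtFilter _ _) hk.continuousAt
  have hVd : ∀ t ≥ (0:ℝ), HasDerivAt V (1 / (2 * Real.sqrt (F t + ε^2)) * (k t * g t)) t := by
    intro t ht
    have := (Real.hasDerivAt_sqrt (ne_of_gt (hFpos t ht))).comp t ((hFd t).add_const (ε^2))
    exact this
  -- monotone difference
  set φ : ℝ → ℝ := fun t => (1/2) * W t - V t with hφ
  have hmono : MonotoneOn φ (Ici 0) := by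
    apply monotoneOn_of_deriv_nonneg (convex_Ici 0)
    · exact ((continuous_const.mul hWc).sub ((hFc.add continuous_const).sqrt)).continuousOn
    · intro t ht
      rw [interior_Ici] at ht
      exact ((((hWd t).const_mul (1/2)).sub (hVd t (le_of_lt ht))).differentiableAt).differentiableWithinAt
    · intro t ht
      rw [interior_Ici] at ht
      have ht' : (0:ℝ) ≤ t := le_of_lt ht
      have hd : HasDerivAt φ ((1/2) * k t - 1 / (2 * Real.sqrt (F t + ε^2)) * (k t * g t)) t :=
        ((hWd t).const_mul (1/2)).sub (hVd t ht')
      rw [hd.deriv]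
      have hs : 0 < Real.sqrt (F t + ε^2) := Real.sqrt_pos.mpr (hFpos t ht')
      have hgle : g t ≤ Real.sqrt (F t + ε^2) := by
        rw [Real.le_sqrt (hg0 t) (le_of_lt (hFpos t ht'))]
        exact le_trans (hyp t ht') (le_add_of_nonneg_right (sq_nonneg ε))
      have : 1 / (2 * Real.sqrt (F t + ε^2)) * (k t * g t) ≤ (1/2) * k t := by
        rw [div_mul_eq_mul_div, one_mul, div_le_iff₀ (by positivity)]
        calc k t * g t ≤ k t * Real.sqrt (F t + ε^2) := by
              exact mul_le_mul_of_nonneg_left hgle (hk0 t)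
          _ = 1 / 2 * k t * (2 * Real.sqrt (F t + ε^2)) := by ring
      linarith
  intro t ht
  have h0 : φ 0 ≤ φ t := hmono (self_mem_Ici) ht ht
  have hφ0 : φ 0 = -ε := by
    simp only [hφ, hW, hV, hF]
    rw [intervalIntegral.integral_same, intervalIntegral.integral_same]
    simp [Real.sqrt_sq hε.le]
  have hgle : g t ≤ V t := by
    rw [hV]
    rw [Real.le_sqrt (hg0 t) (le_of_lt (hFpos t ht))]
    exact le_trans (hyp t ht) (le_add_of_nonneg_right (sq_nonneg ε))
  have := h0
  rw [hφ0] at this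
  simp only [hφ] at this
  linarith

lemma primitive_bound (h : ℝ → ℝ) (hh : Continuous h) (hh0 : ∀ t, 0 ≤ h t)
    (c : ℝ) (hc : 0 < c) (T : ℝ) (hT : 0 ≤ T) :
    ∫ t in (0:ℝ)..T, Real.exp (-c * t) * ∫ τ in (0:ℝ)..t, Real.exp (c * τ) * h τ
      ≤ (1/c) * ∫ t in (0:ℝ)..T, h t := by
  set k : ℝ → ℝ := fun τ => Real.exp (c * τ) * h τ with hk
  have hkc : Continuous k := ((continuous_const.mul continuous_id).rexp).mul hh
  set W : ℝ → ℝ := fun t => ∫ τ in (0:ℝ)..t, k τ with hW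
  have hWc : Continuous W := intervalIntegral.continuous_primitive
    (fun a b => hkc.intervalIntegrable a b) 0
  set A : ℝ → ℝ := fun t => Real.exp (-c * t) * W t with hA
  have hAc : Continuous A := ((continuous_const.mul continuous_id).rexp).mul hWc
  have hAd : ∀ t, HasDerivAt A (h t - c * A t) t := by
    intro t
    have hWd : HasDerivAt W (k t) t :=
      intervalIntegral.integral_hasDerivAt_right (hkc.intervalIntegrable 0 t)
        (hkc.stronglyMeasurableAtFilter _ _) hkc.continuousAt
    have hed : HasDerivAt (fun t => Real.exp (-c * t)) (Real.exp (-c * t) * -c) t := by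
      simpa using ((hasDerivAt_id t).const_mul (-c)).exp
    have : HasDerivAt (fun t => Real.exp (-c * t) * W t) (Real.exp (-c * t) * -c * W t + Real.exp (-c * t) * k t) t := hed.mul hWd
    convert this using 1
    show h t - c * (Real.exp (-c * t) * W t) = Real.exp (-c * t) * -c * W t + Real.exp (-c * t) * (Real.exp (c * t) * h t)
    have he : Real.exp (-c * t) * Real.exp (c * t) = 1 := by
      rw [← Real.exp_add]; ring_nf; exact Real.exp_zero
    linear_combination (-h t) * he
  have hftc : ∫ t in (0:ℝ)..T, (h t - c * A t) = A T - A 0 :=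
    intervalIntegral.integral_eq_sub_of_hasDerivAt (fun x _ => hAd x)
      ((hh.sub (continuous_const.mul hAc)).intervalIntegrable 0 T)
  have hA0' : A 0 = 0 := by simp [hA, hW]
  have hAT : 0 ≤ A T := by
    apply mul_nonneg (Real.exp_nonneg _)
    exact intervalIntegral.integral_nonneg hT
      (fun u hu => mul_nonneg (Real.exp_nonneg _) (hh0 u))
  have hsub : ∫ t in (0:ℝ)..T, (h t - c * A t)
      = (∫ t in (0:ℝ)..T, h t) - c * ∫ t in (0:ℝ)..T, A t := by
    rw [intervalIntegral.integral_sub (g := fun t => c * A t) (hh.intervalIntegrable 0 T)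
      ((continuous_const.mul hAc).intervalIntegrable 0 T),
      intervalIntegral.integral_const_mul]
  rw [hsub, hA0'] at hftc
  have : c * ∫ t in (0:ℝ)..T, A t ≤ ∫ t in (0:ℝ)..T, h t := by linarith
  have goal : (∫ t in (0:ℝ)..T, A t) ≤ (1/c) * ∫ t in (0:ℝ)..T, h t := by
    have h2 := mul_le_mul_of_nonneg_left this (by positivity : (0:ℝ) ≤ 1/c)
    have h3 : (1/c) * (c * ∫ t in (0:ℝ)..T, A t) = ∫ t in (0:ℝ)..T, A t := by
      field_simp
    linarith
  simpa [hA, hW, hk] using goal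

theorem stmt_0 (f h : ℝ → ℝ) (lam : ℝ)
    (hf : Continuous f) (hh : Continuous h)
    (hf0 : ∀ t, 0 ≤ f t) (hh0 : ∀ t, 0 ≤ h t) (hlam : 0 < lam)
    (hyp : ∀ t ≥ (0:ℝ),
      (f t) ^ 2 ≤ Real.exp (-lam * t) * ∫ τ in (0:ℝ)..t, Real.exp (lam * τ) * h τ * f τ) :
    ∀ T ≥ (0:ℝ), (∫ t in (0:ℝ)..T, f t) ≤ (2 / lam) * ∫ t in (0:ℝ)..T, h t := by
  intro T hT
  set c : ℝ := lam / 2 with hcdef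
  have hc : 0 < c := by positivity
  set k : ℝ → ℝ := fun τ => Real.exp (c * τ) * h τ with hk
  set g : ℝ → ℝ := fun t => Real.exp (c * t) * f t with hg
  have hkc : Continuous k := ((continuous_const.mul continuous_id).rexp).mul hh
  have hgc : Continuous g := ((continuous_const.mul continuous_id).rexp).mul hf
  have hk0 : ∀ t, 0 ≤ k t := fun t => mul_nonneg (Real.exp_nonneg _) (hh0 t)
  have hg0 : ∀ t, 0 ≤ g t := fun t => mul_nonneg (Real.exp_nonneg _) (hf0 t)
  have hkg : (fun τ => k τ * g τ) = fun τ => Real.exp (lam * τ) * h τ * f τ := by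
    funext τ
    simp only [hk, hg]
    rw [show Real.exp (c*τ) * h τ * (Real.exp (c*τ) * f τ)
        = (Real.exp (c*τ) * Real.exp (c*τ)) * h τ * f τ by ring, ← Real.exp_add]
    congr 2
    rw [hcdef]; ring
  have hyp' : ∀ t ≥ (0:ℝ), g t ^ 2 ≤ ∫ τ in (0:ℝ)..t, k τ * g τ := by
    intro t ht
    have h1 := hyp t ht
    have he2 : Real.exp (c*t) ^ 2 = Real.exp (lam * t) := by
      rw [sq, ← Real.exp_add]; congr 1; rw [hcdef]; ring
    have he3 : Real.exp (lam*t) * Real.exp (-lam*t) = 1 := by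
      rw [← Real.exp_add]; simp
    calc g t ^ 2 = Real.exp (lam*t) * f t ^ 2 := by
          simp only [hg]; rw [mul_pow, he2]
      _ ≤ Real.exp (lam*t) * (Real.exp (-lam*t)
            * ∫ τ in (0:ℝ)..t, Real.exp (lam * τ) * h τ * f τ) :=
          mul_le_mul_of_nonneg_left h1 (Real.exp_nonneg _)
      _ = ∫ τ in (0:ℝ)..t, Real.exp (lam * τ) * h τ * f τ := by
          rw [← mul_assoc, he3, one_mul]
      _ = ∫ τ in (0:ℝ)..t, k τ * g τ := by rw [hkg]
  set W : ℝ → ℝ := fun t => ∫ τ in (0:ℝ)..t, k τ with hW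
  have hWc : Continuous W := intervalIntegral.continuous_primitive
    (fun a b => hkc.intervalIntegrable a b) 0
  have hW0 : ∀ t ≥ (0:ℝ), 0 ≤ W t := fun t ht =>
    intervalIntegral.integral_nonneg ht (fun u _ => hk0 u)
  set A : ℝ → ℝ := fun t => Real.exp (-c * t) * W t with hA
  have hAc : Continuous A := ((continuous_const.mul continuous_id).rexp).mul hWc
  have key : ∀ ε : ℝ, 0 < ε →
      (∫ t in (0:ℝ)..T, f t) ≤ ε * T + (1/lam) * ∫ t in (0:ℝ)..T, h t := by
    intro ε hε
    have hgr := sqr_gronwall k g hkc hgc hk0 hg0 hyp' ε hε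
    have hpt : ∀ t ∈ Icc (0:ℝ) T, f t ≤ ε + (1/2) * A t := by
      intro t ht
      obtain ⟨ht0, -⟩ := ht
      have h1 : g t ≤ ε + (1/2) * W t := hgr t ht0
      have he1 : Real.exp (-c * t) ≤ 1 := by
        rw [Real.exp_le_one_iff]
        nlinarith
      have he0 : 0 < Real.exp (-c * t) := Real.exp_pos _
      have hfg : f t = Real.exp (-c * t) * g t := by
        simp only [hg]
        rw [← mul_assoc, ← Real.exp_add]
        simp
      rw [hfg, hA]
      nlinarith [hW0 t ht0, mul_le_mul_of_nonneg_left h1 he0.le]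
    have hint : (∫ t in (0:ℝ)..T, f t) ≤ ∫ t in (0:ℝ)..T, (ε + (1/2) * A t) := by
      apply intervalIntegral.integral_mono_on hT (hf.intervalIntegrable 0 T)
        ((continuous_const.add (continuous_const.mul hAc)).intervalIntegrable 0 T) hpt
    have heq : (∫ t in (0:ℝ)..T, (ε + (1/2) * A t))
        = ε * T + (1/2) * ∫ t in (0:ℝ)..T, A t := by
      rw [intervalIntegral.integral_add (g := fun t => (1/2) * A t) (intervalIntegrable_const)
        ((continuous_const.mul hAc).intervalIntegrable 0 T),
        intervalIntegral.integral_const, intervalIntegral.integral_const_mul]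
      simp [mul_comm]
    have hAb : (∫ t in (0:ℝ)..T, A t) ≤ (1/c) * ∫ t in (0:ℝ)..T, h t := by
      simpa [hA, hW, hk] using primitive_bound h hh hh0 c hc T hT
    have hcc : (1/2) * (1/c) = 1/lam := by rw [hcdef]; field_simp
    have hh_nonneg : 0 ≤ ∫ t in (0:ℝ)..T, h t :=
      intervalIntegral.integral_nonneg hT (fun u _ => hh0 u)
    calc (∫ t in (0:ℝ)..T, f t) ≤ ε * T + (1/2) * ∫ t in (0:ℝ)..T, A t := by
          rw [← heq]; exact hint
      _ ≤ ε * T + (1/2) * ((1/c) * ∫ t in (0:ℝ)..T, h t) := by nlinarith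
      _ = ε * T + (1/lam) * ∫ t in (0:ℝ)..T, h t := by rw [← mul_assoc, hcc]
  have hfin : (∫ t in (0:ℝ)..T, f t) ≤ (1/lam) * ∫ t in (0:ℝ)..T, h t := by
    apply le_of_forall_pos_le_add
    intro δ hδ
    have hε : 0 < δ / (T + 1) := by positivity
    have := key _ hε
    have hTb : δ / (T + 1) * T ≤ δ := by
      rw [div_mul_eq_mul_div, div_le_iff₀ (by linarith)]
      nlinarith
    linarith
  have hh_nonneg : 0 ≤ ∫ t in (0:ℝ)..T, h t :=
    intervalIntegral.integral_nonneg hT (fun u _ => hh0 u)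
  calc (∫ t in (0:ℝ)..T, f t) ≤ (1/lam) * ∫ t in (0:ℝ)..T, h t := hfin
    _ ≤ (2/lam) * ∫ t in (0:ℝ)..T, h t := by
        apply mul_le_mul_of_nonneg_right _ hh_nonneg
        gcongr
        norm_num
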